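/- Let G be a graph with n vertices, m edges, and first Zagreb index M1, with n ≤ 8m²/(2m + M1). Then QE(G) ≤ 2m/n + √((n−1)·(2m + M1 − 4m²/n − (2m/n)²)). -/

import Mathlib

open Finset Matrix BigOperators

/-- The signless Laplacian matrix `Q(G) = D(G) + A(G)` of a simple graph, over `ℝ`. -/
noncomputable def signlessLaplacian {V : Type*} [Fintype V] [DecidableEq V]
    (G : SimpleGraph V) [DecidableRel G.Adj] : Matrix V V ℝ :=
  Matrix.diagonal (fun v => (G.degree v : ℝ)) + G.adjMatrix ℝ

lemma signlessLaplacian_isHermitian {V : Type*} [Fintype V] [DecidableEq V]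
    (G : SimpleGraph V) [DecidableRel G.Adj] : (signlessLaplacian G).IsHermitian := by
  unfold signlessLaplacian
  apply Matrix.IsHermitian.add
  · exact Matrix.isHermitian_diagonal _
  · rw [Matrix.IsHermitian, conjTranspose_eq_transpose_of_trivial]
    exact G.isSymm_adjMatrix

/-- The signless Laplacian eigenvalues of `G` (as a function on the vertex index type). -/
noncomputable def qEig {V : Type*} [Fintype V] [DecidableEq V]
    (G : SimpleGraph V) [DecidableRel G.Adj] : V → ℝ :=
  (signlessLaplacian_isHermitian G).eigenvalues

/-- The number of edges of `G`, as a real number. -/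
noncomputable def mE {V : Type*} [Fintype V] [DecidableEq V]
    (G : SimpleGraph V) [DecidableRel G.Adj] : ℝ :=
  G.edgeFinset.card

/-- The first Zagreb index `M₁(G) = Σ d(v)²`, as a real number. -/
noncomputable def M1 {V : Type*} [Fintype V] [DecidableEq V]
    (G : SimpleGraph V) [DecidableRel G.Adj] : ℝ :=
  ∑ v, (G.degree v : ℝ) ^ 2

/-- The signless Laplacian energy `QE(G) = Σ |qᵢ - 2m/n|`. -/
noncomputable def QE {V : Type*} [Fintype V] [DecidableEq V]
    (G : SimpleGraph V) [DecidableRel G.Adj] : ℝ :=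
  ∑ i, |qEig G i - 2 * mE G / (Fintype.card V : ℝ)|

/- ### Auxiliary lemmas -/

lemma my_sum_eig {n : Type*} [Fintype n] [DecidableEq n] {A : Matrix n n ℝ}
    (hA : A.IsHermitian) : ∑ i, hA.eigenvalues i = A.trace := by
  conv_rhs => rw [hA.spectral_theorem, Unitary.conjStarAlgAut_apply]
  rw [Matrix.trace_mul_comm, ← mul_assoc, Unitary.coe_star_mul_self, one_mul, trace_diagonal]
  simp

lemma my_sum_eig_sq {n : Type*} [Fintype n] [DecidableEq n] {A : Matrix n n ℝ}
    (hA : A.IsHermitian) : ∑ i, hA.eigenvalues i ^ 2 = (A * A).trace := by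
  conv_rhs => rw [hA.spectral_theorem, Unitary.conjStarAlgAut_apply]
  rw [show ∀ U D W : Matrix n n ℝ, (U*D*W) * (U*D*W) = U*(D*(W*U)*D)*W by
      intros; noncomm_ring,
    Unitary.coe_star_mul_self]
  rw [Matrix.trace_mul_comm, ← mul_assoc, Unitary.coe_star_mul_self, one_mul]
  rw [mul_one, diagonal_mul_diagonal, trace_diagonal]
  simp [sq]

lemma my_degree_eq_sum {V : Type*} [Fintype V] [DecidableEq V]
    (G : SimpleGraph V) [DecidableRel G.Adj] (v : V) :
    (G.degree v : ℝ) = ∑ u, if G.Adj v u then (1:ℝ) else 0 := by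
  rw [SimpleGraph.degree, SimpleGraph.neighborFinset_eq_filter, Finset.sum_boole]

lemma my_Q_posSemidef {V : Type*} [Fintype V] [DecidableEq V]
    (G : SimpleGraph V) [DecidableRel G.Adj] : (signlessLaplacian G).PosSemidef := by
  refine Matrix.PosSemidef.of_dotProduct_mulVec_nonneg (signlessLaplacian_isHermitian G) fun x => ?_
  have h1 : dotProduct (star x) (signlessLaplacian G *ᵥ x)
      = ∑ v, ∑ u, (if G.Adj v u then x v * x v + x v * x u else 0) := by
    rw [star_trivial, signlessLaplacian, add_mulVec, dotProduct_add,
      SimpleGraph.dotProduct_mulVec_adjMatrix]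
    simp only [dotProduct, mulVec_diagonal]
    rw [← Finset.sum_add_distrib]
    refine Finset.sum_congr rfl fun v _ => ?_
    rw [my_degree_eq_sum, Finset.sum_mul, Finset.mul_sum, ← Finset.sum_add_distrib]
    refine Finset.sum_congr rfl fun u _ => ?_
    split_ifs <;> ring
  have hswap : ∑ v, ∑ u, (if G.Adj v u then x v * x v + x v * x u else 0)
      = ∑ v, ∑ u, (if G.Adj v u then x u * x u + x u * x v else 0) := by
    rw [Finset.sum_comm]
    refine Finset.sum_congr rfl fun v _ => Finset.sum_congr rfl fun u _ => ?_
    exact if_congr (G.adj_comm u v) rfl rfl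
  have h2 : (0:ℝ) ≤ ∑ v, ∑ u, (if G.Adj v u then (x v + x u)^2 else 0) :=
    Finset.sum_nonneg fun _ _ => Finset.sum_nonneg fun _ _ => by positivity
  have h3 : (∑ v, ∑ u, (if G.Adj v u then x v * x v + x v * x u else 0))
      + (∑ v, ∑ u, (if G.Adj v u then x u * x u + x u * x v else 0))
      = ∑ v, ∑ u, (if G.Adj v u then (x v + x u)^2 else 0) := by
    rw [← Finset.sum_add_distrib]
    refine Finset.sum_congr rfl fun v _ => ?_
    rw [← Finset.sum_add_distrib]
    refine Finset.sum_congr rfl fun u _ => ?_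
    split_ifs <;> ring
  rw [h1]
  linarith [hswap, h3, h2]

lemma my_sum_degrees {V : Type*} [Fintype V] [DecidableEq V]
    (G : SimpleGraph V) [DecidableRel G.Adj] :
    ∑ v, (G.degree v : ℝ) = 2 * mE G := by
  rw [← Nat.cast_sum, G.sum_degrees_eq_twice_card_edges, mE]
  push_cast; ring

lemma my_trace_Q {V : Type*} [Fintype V] [DecidableEq V]
    (G : SimpleGraph V) [DecidableRel G.Adj] :
    (signlessLaplacian G).trace = 2 * mE G := by
  rw [signlessLaplacian, trace_add, trace_diagonal, SimpleGraph.trace_adjMatrix, add_zero]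
  exact my_sum_degrees G

lemma my_trace_Q_sq {V : Type*} [Fintype V] [DecidableEq V]
    (G : SimpleGraph V) [DecidableRel G.Adj] :
    (signlessLaplacian G * signlessLaplacian G).trace = 2 * mE G + M1 G := by
  rw [signlessLaplacian, add_mul, mul_add, mul_add, trace_add, trace_add, trace_add]
  have h1 : ((Matrix.diagonal fun v => (G.degree v : ℝ))
      * Matrix.diagonal fun v => (G.degree v : ℝ)).trace = M1 G := by
    rw [diagonal_mul_diagonal, trace_diagonal, M1]
    simp [sq]
  have h2 : ((Matrix.diagonal fun v => (G.degree v : ℝ)) * G.adjMatrix ℝ).trace = 0 := by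
    simp only [Matrix.trace, Matrix.diag, Matrix.diagonal_mul, SimpleGraph.adjMatrix_apply]
    refine Finset.sum_eq_zero fun v _ => ?_
    simp [G.irrefl]
  have h3 : (G.adjMatrix ℝ * Matrix.diagonal fun v => (G.degree v : ℝ)).trace = 0 := by
    simp only [Matrix.trace, Matrix.diag, Matrix.mul_diagonal, SimpleGraph.adjMatrix_apply]
    refine Finset.sum_eq_zero fun v _ => ?_
    simp [G.irrefl]
  have h4 : (G.adjMatrix ℝ * G.adjMatrix ℝ).trace = 2 * mE G := by
    simp only [Matrix.trace, Matrix.diag, G.adjMatrix_mul_self_apply_self]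
    exact my_sum_degrees G
  rw [h1, h2, h3, h4]; ring

lemma my_rayleigh {n : Type*} [Fintype n] [DecidableEq n] {A : Matrix n n ℝ}
    (hA : A.IsHermitian) (w : n → ℝ) :
    ∃ y : n → ℝ, (∑ i, (y i)^2 = ∑ i, (w i)^2)
      ∧ w ⬝ᵥ (A *ᵥ w) = ∑ i, hA.eigenvalues i * (y i)^2 := by
  set U : Matrix n n ℝ := (Matrix.IsHermitian.eigenvectorUnitary hA : Matrix n n ℝ) with hU
  have hUU : U * star U = 1 :=
    Matrix.mem_unitaryGroup_iff.mp (Matrix.IsHermitian.eigenvectorUnitary hA).2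
  have hUstar : star U = Uᵀ := by
    rw [hU, ← conjTranspose_eq_transpose_of_trivial]; rfl
  refine ⟨(star U) *ᵥ w, ?_, ?_⟩
  · have h1 : ∀ v : n → ℝ, ∑ i, (v i)^2 = v ⬝ᵥ v := by
      intro v; simp [dotProduct, sq]
    rw [h1, h1, hUstar, mulVec_transpose, ← Matrix.dotProduct_mulVec,
      ← mulVec_transpose, mulVec_mulVec, ← hUstar, hUU, one_mulVec]
  · conv_lhs => rw [hA.spectral_theorem, Unitary.conjStarAlgAut_apply]
    rw [← mulVec_mulVec, ← mulVec_mulVec, Matrix.dotProduct_mulVec w]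
    have h2 : w ᵥ* U = (star U) *ᵥ w := by rw [hUstar, mulVec_transpose]
    rw [h2]
    simp only [dotProduct, mulVec_diagonal, Function.comp_apply, RCLike.ofReal_real_eq_id, id_eq]
    exact Finset.sum_congr rfl fun i _ => by ring

lemma my_mono {c a t S : ℝ} (hc : 1 ≤ c) (ha : 0 < a) (hat : a ≤ t) (htS : t^2 ≤ S)
    (hS : S ≤ (c+1)*a^2) :
    t + Real.sqrt (c*(S - t^2)) ≤ a + Real.sqrt (c*(S - a^2)) := by
  set p := Real.sqrt (c*(S - a^2)) with hp
  set q := Real.sqrt (c*(S - t^2)) with hq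
  have ha2t2 : a^2 ≤ t^2 := by nlinarith
  have hp2 : p^2 = c*(S - a^2) := Real.sq_sqrt (by nlinarith)
  have hq2 : q^2 = c*(S - t^2) := Real.sq_sqrt (by nlinarith)
  have hp0 : 0 ≤ p := Real.sqrt_nonneg _
  have hq0 : 0 ≤ q := Real.sqrt_nonneg _
  have hqca : q ≤ c*a := by
    have h : q^2 ≤ (c*a)^2 := by nlinarith
    have hca : (0:ℝ) ≤ c*a := by positivity
    calc q = Real.sqrt (q^2) := (Real.sqrt_sq hq0).symm
      _ ≤ Real.sqrt ((c*a)^2) := Real.sqrt_le_sqrt h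
      _ = c*a := Real.sqrt_sq hca
  have key : (q + (t - a))^2 ≤ p^2 := by
    nlinarith [mul_nonneg (sub_nonneg.2 hat) (show 0 ≤ c*(t+a) - (t-a) - 2*q by nlinarith)]
  have h5 : (0:ℝ) ≤ q + (t - a) := by linarith
  have h6 : q + (t - a) ≤ p := by
    calc q + (t - a) = Real.sqrt ((q + (t - a))^2) := (Real.sqrt_sq h5).symm
      _ ≤ Real.sqrt (p^2) := Real.sqrt_le_sqrt key
      _ = p := Real.sqrt_sq hp0
  linarith

lemma my_aux {n : ℕ} (q : Fin n → ℝ) (m M : ℝ)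
    (hm : 0 < m) (hn2 : 2 ≤ n)
    (htr : ∑ i, q i = 2*m) (htr2 : ∑ i, q i^2 = 2*m + M)
    (hray : ∃ i, 4*m/(n:ℝ) ≤ q i)
    (hn : (n:ℝ) ≤ 8*m^2/(2*m+M)) :
    ∑ i, |q i - 2*m/(n:ℝ)| ≤ 2*m/(n:ℝ)
      + Real.sqrt (((n:ℝ)-1)*(2*m+M-4*m^2/(n:ℝ)-(2*m/(n:ℝ))^2)) := by
  have hnn0 : (0:ℝ) < (n:ℝ) := by exact_mod_cast (by omega : 0 < n)
  have hnn2 : (2:ℝ) ≤ (n:ℝ) := by exact_mod_cast hn2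
  obtain ⟨j, hj⟩ := hray
  have hqj : 0 < q j := lt_of_lt_of_le (by positivity) hj
  have hden : 0 < 2*m + M := by
    rw [← htr2]
    calc (0:ℝ) < q j ^ 2 := by positivity
      _ ≤ ∑ i, q i ^ 2 :=
        Finset.single_le_sum (f := fun i => q i ^ 2) (fun i _ => sq_nonneg _) (mem_univ j)
  have hyp : (n:ℝ)*(2*m+M) ≤ 8*m^2 := (le_div_iff₀ hden).mp hn
  obtain ⟨i₀, -, hmax⟩ := Finset.exists_max_image univ q ⟨j, mem_univ j⟩
  have hqi0 : 4*m/(n:ℝ) ≤ q i₀ := le_trans hj (hmax j (mem_univ j))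
  set a := 2*m/(n:ℝ) with hadef
  have ha : 0 < a := by positivity
  set t := q i₀ - a with htdef
  have hta : a ≤ t := by
    have h2a : 4*m/(n:ℝ) = a + a := by rw [hadef]; ring
    rw [htdef]; linarith
  set S := 2*m + M - 4*m^2/(n:ℝ) with hSdef
  have hsx : ∑ i, (q i - a)^2 = S := by
    have hexp : ∀ i : Fin n, (q i - a)^2 = q i^2 - 2*a*q i + a^2 := fun i => by ring
    simp_rw [hexp]
    rw [Finset.sum_add_distrib, Finset.sum_sub_distrib, htr2, ← Finset.mul_sum, htr,
      Finset.sum_const, Finset.card_univ, Fintype.card_fin, nsmul_eq_mul, hSdef, hadef]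
    field_simp
    ring
  have htS : t^2 ≤ S := by
    rw [← hsx, htdef]
    exact Finset.single_le_sum (f := fun i => (q i - a) ^ 2) (fun i _ => sq_nonneg _)
      (mem_univ i₀)
  have hSna : S ≤ ((n:ℝ)-1+1)*a^2 := by
    have key : 2*m+M ≤ 8*m^2/(n:ℝ) := by
      rw [le_div_iff₀ hnn0]; linarith [hyp]
    have hna : ((n:ℝ)-1+1)*a^2 = 4*m^2/(n:ℝ) := by
      rw [hadef]; field_simp; ring
    have h88 : 8*m^2/(n:ℝ) = 4*m^2/(n:ℝ) + 4*m^2/(n:ℝ) := by ring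
    rw [hSdef, hna]; linarith
  have herase : ∑ i ∈ univ.erase i₀, (q i - a)^2 = S - t^2 := by
    have h : (q i₀ - a)^2 + ∑ i ∈ univ.erase i₀, (q i - a)^2 = S := by
      rw [← hsx]; exact Finset.add_sum_erase _ (fun i => (q i - a)^2) (mem_univ i₀)
    rw [htdef]; linarith
  have hcard : (((univ : Finset (Fin n)).erase i₀).card : ℝ) = (n:ℝ) - 1 := by
    rw [Finset.card_erase_of_mem (mem_univ i₀), Finset.card_univ, Fintype.card_fin,
      Nat.cast_sub (by omega : 1 ≤ n)]
    simp
  have hcs : (∑ i ∈ univ.erase i₀, |q i - a|)^2 ≤ ((n:ℝ)-1) * (S - t^2) := by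
    calc (∑ i ∈ univ.erase i₀, |q i - a|)^2
        ≤ (((univ : Finset (Fin n)).erase i₀).card : ℝ) * ∑ i ∈ univ.erase i₀, |q i - a|^2 :=
          sq_sum_le_card_mul_sum_sq
      _ = ((n:ℝ)-1) * (S - t^2) := by
          rw [hcard]
          congr 1
          rw [← herase]
          exact Finset.sum_congr rfl fun i _ => sq_abs _
  have hepos : 0 ≤ ∑ i ∈ univ.erase i₀, |q i - a| :=
    Finset.sum_nonneg fun i _ => abs_nonneg _
  have hle : ∑ i ∈ univ.erase i₀, |q i - a| ≤ Real.sqrt (((n:ℝ)-1)*(S - t^2)) := by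
    rw [← Real.sqrt_sq hepos]
    exact Real.sqrt_le_sqrt hcs
  have habs : |q i₀ - a| = t := by
    rw [htdef] at hta ⊢
    exact abs_of_nonneg (by linarith)
  have hsplit : ∑ i, |q i - a| = |q i₀ - a| + ∑ i ∈ univ.erase i₀, |q i - a| :=
    (Finset.add_sum_erase univ (fun i => |q i - a|) (mem_univ i₀)).symm
  have hmono := my_mono (show (1:ℝ) ≤ (n:ℝ)-1 by linarith) ha hta htS hSna
  have hgoal : ((n:ℝ)-1)*(2*m+M-4*m^2/(n:ℝ)-(2*m/(n:ℝ))^2) = ((n:ℝ)-1)*(S - a^2) := by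
    rw [hSdef, hadef]
  calc ∑ i, |q i - a| = t + ∑ i ∈ univ.erase i₀, |q i - a| := by rw [hsplit, habs]
    _ ≤ t + Real.sqrt (((n:ℝ)-1)*(S - t^2)) := by linarith
    _ ≤ a + Real.sqrt (((n:ℝ)-1)*(S - a^2)) := hmono
    _ = 2*m/(n:ℝ) + Real.sqrt (((n:ℝ)-1)*(2*m+M-4*m^2/(n:ℝ)-(2*m/(n:ℝ))^2)) := by
        rw [hgoal]

theorem QE_upper_bound_small_n {n : ℕ} (G : SimpleGraph (Fin n)) [DecidableRel G.Adj]
    (hn : (n : ℝ) ≤ 8 * (mE G) ^ 2 / (2 * mE G + M1 G)) :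
    QE G ≤ 2 * mE G / (n : ℝ)
      + Real.sqrt (((n : ℝ) - 1)
          * (2 * mE G + M1 G - 4 * (mE G) ^ 2 / (n : ℝ) - (2 * mE G / (n : ℝ)) ^ 2)) := by
  have htr : ∑ i, qEig G i = 2 * mE G := by
    unfold qEig; rw [my_sum_eig, my_trace_Q]
  have htr2 : ∑ i, qEig G i ^ 2 = 2 * mE G + M1 G := by
    unfold qEig; rw [my_sum_eig_sq, my_trace_Q_sq]
  have hQEeq : QE G = ∑ i, |qEig G i - 2 * mE G / (n:ℝ)| := by
    unfold QE; rw [Fintype.card_fin]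
  by_cases hm : mE G = 0
  · have hcard : G.edgeFinset.card = 0 := by
      have h := hm; unfold mE at h; exact_mod_cast h
    have hdeg0 : ∀ v, G.degree v = 0 := by
      have hs : ∑ v, G.degree v = 0 := by
        rw [G.sum_degrees_eq_twice_card_edges, hcard]
      intro v
      exact (Finset.sum_eq_zero_iff_of_nonneg (fun _ _ => Nat.zero_le _)).mp hs v (mem_univ v)
    have hM1 : M1 G = 0 := by unfold M1; simp [hdeg0]
    have hq2 : ∑ i, qEig G i ^ 2 = 0 := by rw [htr2, hm, hM1]; ring
    have hq : ∀ i, qEig G i = 0 := by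
      intro i
      have h := (Finset.sum_eq_zero_iff_of_nonneg
        (fun i _ => sq_nonneg (qEig G i))).mp hq2 i (mem_univ i)
      exact pow_eq_zero_iff two_ne_zero |>.mp h
    have hL : QE G = 0 := by rw [hQEeq]; simp [hq, hm]
    rw [hL, hm]
    positivity
  · have hm' : 0 < mE G := lt_of_le_of_ne (by unfold mE; positivity) (Ne.symm hm)
    have hn2 : 2 ≤ n := by
      by_contra h
      push_neg at h
      have hdlt : ∀ v : Fin n, G.degree v < n := fun v => by
        have hx := G.degree_lt_card_verts v; rwa [Fintype.card_fin] at hx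
      have hd0 : ∀ v : Fin n, G.degree v = 0 := fun v => by have := hdlt v; omega
      have hs : (2:ℕ) * G.edgeFinset.card = 0 := by
        rw [← G.sum_degrees_eq_twice_card_edges]
        exact Finset.sum_eq_zero fun v _ => hd0 v
      have hc : G.edgeFinset.card = 0 := by omega
      exact hm (by unfold mE; rw [hc]; simp)
    have hnn0 : (0:ℝ) < n := by exact_mod_cast (by omega : 0 < n)
    obtain ⟨y, hy1, hy2⟩ := my_rayleigh (signlessLaplacian_isHermitian G) (fun _ => (1:ℝ))
    have hyn : ∑ i, (y i)^2 = (n:ℝ) := by rw [hy1]; simp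
    have hQw : (fun _ => (1:ℝ)) ⬝ᵥ (signlessLaplacian G *ᵥ fun _ => (1:ℝ)) = 4 * mE G := by
      rw [signlessLaplacian, add_mulVec, dotProduct_add, SimpleGraph.dotProduct_mulVec_adjMatrix]
      have h1 : (fun _ => (1:ℝ)) ⬝ᵥ ((Matrix.diagonal fun v => (G.degree v:ℝ)) *ᵥ fun _ => (1:ℝ))
          = ∑ v, (G.degree v : ℝ) := by
        simp [dotProduct, mulVec_diagonal]
      have h2 : ∑ i : Fin n, ∑ j : Fin n, (if G.Adj i j then (1:ℝ)*1 else 0)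
          = ∑ v, (G.degree v:ℝ) := by
        simp only [mul_one]
        exact Finset.sum_congr rfl fun v _ => (my_degree_eq_sum G v).symm
      rw [h1, h2, my_sum_degrees]; ring
    have hsum : ∑ i, qEig G i * (y i)^2 = 4 * mE G := by
      unfold qEig; rw [← hy2, hQw]
    obtain ⟨i₀, -, hmax⟩ := Finset.exists_max_image univ (qEig G) ⟨⟨0, by omega⟩, mem_univ _⟩
    have hray : ∃ i, 4 * mE G/(n:ℝ) ≤ qEig G i := by
      refine ⟨i₀, ?_⟩
      have hle : ∑ i, qEig G i * (y i)^2 ≤ ∑ i, qEig G i₀ * (y i)^2 :=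
        Finset.sum_le_sum fun i _ =>
          mul_le_mul_of_nonneg_right (hmax i (mem_univ i)) (sq_nonneg _)
      rw [hsum, ← Finset.mul_sum, hyn] at hle
      rw [div_le_iff₀ hnn0]
      linarith
    rw [hQEeq]
    exact my_aux (qEig G) (mE G) (M1 G) hm' hn2 htr htr2 hray hn
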